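/- Let P ∈ (0, a) be a monetary steady state (u'(a − P) = β v'(b + P)). If the relative risk aversion of the old satisfies γ_v(b + P) < 1 + b/P, where γ_v(z) = −z v''(z)/v'(z), then Φ_η(P, P) > 0 and the implicit slope satisfies φ'(P) = −Φ_ξ(P, P)/Φ_η(P, P) > 1; consequently the monetary steady state is locally determinate. -/
import Mathlib


/-- Two-period OLG model (Proposition 2): local determinacy of the monetary
steady state.  Let `P ∈ (0, a)` be a monetary steady state
(`u' (a - P) = β * v' (b + P)`).  If the relative risk aversion of the old,
`γ_v (z) = -z * v'' z / v' z`, satisfies `γ_v (b + P) < 1 + b / P`, then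
`Φ_η (P, P) = β * v' (b + P) + β * v'' (b + P) * P > 0` and the implicit slope
`φ' (P) = -Φ_ξ (P, P) / Φ_η (P, P) > 1`, where
`Φ_ξ (P, P) = -(u' (a - P)) + u'' (a - P) * P`; consequently the monetary
steady state is locally determinate. -/
theorem monetary_steady_state_locally_determinate
    (u v u' u'' v' v'' : ℝ → ℝ) (β a b : ℝ)
    (hβ : 0 < β) (ha : 0 < a) (hb : 0 ≤ b)
    (hu' : ∀ x ∈ Set.Ioi (0 : ℝ), HasDerivAt u (u' x) x)
    (hu'' : ∀ x ∈ Set.Ioi (0 : ℝ), HasDerivAt u' (u'' x) x)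
    (hu''cont : ContinuousOn u'' (Set.Ioi 0))
    (hv' : ∀ x ∈ Set.Ioi (0 : ℝ), HasDerivAt v (v' x) x)
    (hv'' : ∀ x ∈ Set.Ioi (0 : ℝ), HasDerivAt v' (v'' x) x)
    (hv''cont : ContinuousOn v'' (Set.Ioi 0))
    (hu'pos : ∀ x ∈ Set.Ioi (0 : ℝ), 0 < u' x)
    (hu''neg : ∀ x ∈ Set.Ioi (0 : ℝ), u'' x < 0)
    (hv'pos : ∀ x ∈ Set.Ioi (0 : ℝ), 0 < v' x)
    (hv''neg : ∀ x ∈ Set.Ioi (0 : ℝ), v'' x < 0)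
    (P : ℝ) (hP : P ∈ Set.Ioo 0 a)
    (hss : u' (a - P) = β * v' (b + P))
    (hrra : -(b + P) * v'' (b + P) / v' (b + P) < 1 + b / P) :
    0 < β * v' (b + P) + β * v'' (b + P) * P ∧
    1 < -(-(u' (a - P)) + u'' (a - P) * P) /
          (β * v' (b + P) + β * v'' (b + P) * P) := by
  obtain ⟨hP0, hPa⟩ := hP
  have hmem : b + P ∈ Set.Ioi (0:ℝ) := by
    simp only [Set.mem_Ioi]; linarith
  have hmem2 : a - P ∈ Set.Ioi (0:ℝ) := by
    simp only [Set.mem_Ioi]; linarith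
  have hA : 0 < v' (b + P) := hv'pos _ hmem
  have hB : v'' (b + P) < 0 := hv''neg _ hmem
  have hu2 : u'' (a - P) < 0 := hu''neg _ hmem2
  set A := v' (b + P)
  set B := v'' (b + P)
  have hkey : 0 < A + B * P := by
    rw [div_lt_iff₀ hA] at hrra
    have hb' : b / P * P = b := div_mul_cancel₀ b (ne_of_gt hP0)
    nlinarith [mul_lt_mul_of_pos_right hrra hP0]
  have hden : 0 < β * A + β * B * P := by nlinarith
  refine ⟨hden, ?_⟩
  rw [lt_div_iff₀ hden]
  rw [hss]
  nlinarith [mul_neg_of_neg_of_pos hu2 hP0,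
    mul_neg_of_pos_of_neg hβ (mul_neg_of_neg_of_pos hB hP0)]
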